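/- Let Y = [0,1]², h ∈ C¹ with h_min ≤ h(y₁,η₁) ≤ h_max, h_min > 0, and suppose there is C > 0 with |y₂ h_{η₁}(y₁,η₁)/h(y₁,η₁)| ≤ C on [0,L]×Y, where h_{η₁} = ∂h/∂η₁. For w with ∂w/∂η₁, ∂w/∂y₂ ∈ L²(Y), define (b̄·∇w) = ∂w/∂η₁ − (y₂ h_{η₁}/h) ∂w/∂y₂ and a_{y₁}(w,w) = ∫_Y ( h (b̄·∇w)² + (1/h)(∂w/∂y₂)² ). Then for every λ ∈ ( C² h_max h_min / (1 + C² h_max h_min), 1 ), a_{y₁}(w,w) ≥ h_min(1−λ)‖∂w/∂η₁‖²_{L²(Y)} + ((1 − 1/λ) C² h_min + 1/h_max)‖∂w/∂y₂‖²_{L²(Y)}, and both coefficients are strictly positive. -/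

import Mathlib

open MeasureTheory Set

set_option maxHeartbeats 1600000 in
/-- Pointwise coercivity estimate: Young's inequality applied to the cross
term of `h (u - c v)²` plus an analysis of the resulting quadratic in `h`. -/
lemma stmt12_key (hmin hmax C lam h c u v : ℝ) (hhmin : 0 < hmin)
    (hminmax : hmin ≤ hmax) (hC : 0 ≤ C) (hl0 : 0 < lam) (hl1 : lam < 1)
    (hKp : 0 < (lam - 1) * C ^ 2 * hmin * hmax + lam)
    (hh1 : hmin ≤ h) (hh2 : h ≤ hmax) (hc : c ^ 2 ≤ C ^ 2) :
    hmin * (1 - lam) * u ^ 2 + ((1 - 1 / lam) * C ^ 2 * hmin + 1 / hmax) * v ^ 2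
      ≤ h * (u - c * v) ^ 2 + (1 / h) * v ^ 2 := by
  have hh0 : 0 < h := hhmin.trans_le hh1
  have hmax0 : 0 < hmax := hhmin.trans_le hminmax
  have hm : 0 < hmin * (1 - lam) := mul_pos hhmin (by linarith)
  -- the quadratic P'(h) is nonnegative on [hmin, hmax]
  have hPp : 0 ≤ -((hmin * (1 - lam)) * C ^ 2 * lam * hmax
        + ((lam - 1) * C ^ 2 * hmin * hmax + lam)) * h ^ 2
      + (lam * hmax + (hmin * (1 - lam)) * ((lam - 1) * C ^ 2 * hmin * hmax + lam)) * h
      - (hmin * (1 - lam)) * lam * hmax := by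
    rcases eq_or_lt_of_le hminmax with heq | hlt
    · have hh : h = hmin := le_antisymm (heq ▸ hh2) hh1
      subst hh
      subst heq
      nlinarith [sq_nonneg h]
    · have hconc : (hmax - hmin) *
          (-((hmin * (1 - lam)) * C ^ 2 * lam * hmax
              + ((lam - 1) * C ^ 2 * hmin * hmax + lam)) * h ^ 2
            + (lam * hmax + (hmin * (1 - lam)) * ((lam - 1) * C ^ 2 * hmin * hmax + lam)) * h
            - (hmin * (1 - lam)) * lam * hmax)
          = (hmax - h) * (lam ^ 2 * hmin * (hmax - hmin))
            + (h - hmin) * (hmax ^ 2 * (hmin * (1 - lam)) * C ^ 2 * (1 - lam) * (hmax - hmin))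
            + ((hmin * (1 - lam)) * C ^ 2 * lam * hmax
                + ((lam - 1) * C ^ 2 * hmin * hmax + lam))
              * ((h - hmin) * (hmax - h) * (hmax - hmin)) := by ring
      have t1 : 0 ≤ (hmax - h) * (lam ^ 2 * hmin * (hmax - hmin)) := by
        apply mul_nonneg (by linarith)
        have : (0:ℝ) ≤ lam ^ 2 * hmin := by positivity
        nlinarith
      have t2 : 0 ≤ (h - hmin) * (hmax ^ 2 * (hmin * (1 - lam)) * C ^ 2 * (1 - lam) * (hmax - hmin)) := by
        apply mul_nonneg (by linarith)
        have h1 : (0:ℝ) ≤ hmax ^ 2 * (hmin * (1 - lam)) * C ^ 2 * (1 - lam) := by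
          have : (0:ℝ) ≤ 1 - lam := by linarith
          positivity
        nlinarith
      have t3 : 0 ≤ ((hmin * (1 - lam)) * C ^ 2 * lam * hmax
          + ((lam - 1) * C ^ 2 * hmin * hmax + lam))
            * ((h - hmin) * (hmax - h) * (hmax - hmin)) := by
        apply mul_nonneg
        · have : (0:ℝ) ≤ (hmin * (1 - lam)) * C ^ 2 * lam * hmax := by
            have : (0:ℝ) ≤ 1 - lam := by linarith
            positivity
          linarith
        · have : (0:ℝ) ≤ (h - hmin) * (hmax - h) := mul_nonneg (by linarith) (by linarith)
          nlinarith
      nlinarith [hconc, t1, t2, t3, hlt]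
  -- main polynomial inequality (the target multiplied by lam * hmax * h)
  have hA : 0 < h - hmin * (1 - lam) := by nlinarith
  have hcert : (h - hmin * (1 - lam)) *
      (lam * hmax * h ^ 2 * (u - c * v) ^ 2 + lam * hmax * v ^ 2
        - (lam * hmax * h * (hmin * (1 - lam) * u ^ 2)
            + ((lam - 1) * C ^ 2 * hmin * hmax + lam) * h * v ^ 2))
      = lam * hmax * h * ((h - hmin * (1 - lam)) * u - h * c * v) ^ 2
        + v ^ 2 * (lam * hmax * (hmin * (1 - lam)) * h ^ 2 * (C ^ 2 - c ^ 2))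
        + v ^ 2 * (-((hmin * (1 - lam)) * C ^ 2 * lam * hmax
              + ((lam - 1) * C ^ 2 * hmin * hmax + lam)) * h ^ 2
            + (lam * hmax + (hmin * (1 - lam)) * ((lam - 1) * C ^ 2 * hmin * hmax + lam)) * h
            - (hmin * (1 - lam)) * lam * hmax) := by ring
  have hc0 : 0 ≤ lam * hmax * h * ((h - hmin * (1 - lam)) * u - h * c * v) ^ 2 := by positivity
  have hc1 : 0 ≤ v ^ 2 * (lam * hmax * (hmin * (1 - lam)) * h ^ 2 * (C ^ 2 - c ^ 2)) := by
    apply mul_nonneg (sq_nonneg v)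
    have : (0:ℝ) ≤ lam * hmax * (hmin * (1 - lam)) * h ^ 2 := by positivity
    nlinarith
  have hc2 : 0 ≤ v ^ 2 * (-((hmin * (1 - lam)) * C ^ 2 * lam * hmax
        + ((lam - 1) * C ^ 2 * hmin * hmax + lam)) * h ^ 2
      + (lam * hmax + (hmin * (1 - lam)) * ((lam - 1) * C ^ 2 * hmin * hmax + lam)) * h
      - (hmin * (1 - lam)) * lam * hmax) := mul_nonneg (sq_nonneg v) hPp
  have hd0 : 0 ≤ (h - hmin * (1 - lam)) *
      (lam * hmax * h ^ 2 * (u - c * v) ^ 2 + lam * hmax * v ^ 2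
        - (lam * hmax * h * (hmin * (1 - lam) * u ^ 2)
            + ((lam - 1) * C ^ 2 * hmin * hmax + lam) * h * v ^ 2)) := by
    rw [hcert]; linarith
  have hpoly : lam * hmax * h * (hmin * (1 - lam) * u ^ 2)
      + ((lam - 1) * C ^ 2 * hmin * hmax + lam) * h * v ^ 2
      ≤ lam * hmax * h ^ 2 * (u - c * v) ^ 2 + lam * hmax * v ^ 2 := by
    nlinarith [hd0, hA]
  -- divide back by lam * hmax * h
  have hlh : 0 < lam * hmax * h := by positivity
  rw [← mul_le_mul_iff_of_pos_right hlh]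
  have eL : (hmin * (1 - lam) * u ^ 2
        + ((1 - 1 / lam) * C ^ 2 * hmin + 1 / hmax) * v ^ 2) * (lam * hmax * h)
      = lam * hmax * h * (hmin * (1 - lam) * u ^ 2)
        + ((lam - 1) * C ^ 2 * hmin * hmax + lam) * h * v ^ 2 := by
    field_simp
  have eR : (h * (u - c * v) ^ 2 + (1 / h) * v ^ 2) * (lam * hmax * h)
      = lam * hmax * h ^ 2 * (u - c * v) ^ 2 + lam * hmax * v ^ 2 := by
    field_simp
  rw [eL, eR]
  exact hpoly

/-- uniform coercivity of the homogenized bilinear form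
`a_{y₁}(w,w) = ∫_Y ( h (b̄·∇w)² + (1/h)(∂w/∂y₂)² )`, where a point of
`Y = [0,1]²` is `p = (y₂, η₁)`, `w1 = ∂w/∂η₁`, `w2 = ∂w/∂y₂` and
`b̄·∇w = w1 − (y₂ h_{η₁}/h) w2`. For each
`λ ∈ (C² h_max h_min/(1+C² h_max h_min), 1)` both coefficients
`h_min(1−λ)` and `(1−1/λ)C²h_min + 1/h_max` are positive and
`a_{y₁}(w,w) ≥ h_min(1−λ)‖w1‖² + ((1−1/λ)C²h_min + 1/h_max)‖w2‖²`. -/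
theorem stmt12 (hmin hmax C : ℝ) (hhmin : 0 < hmin) (hminmax : hmin ≤ hmax)
    (hC : 0 ≤ C) (h1 hη : ℝ → ℝ) (hm1 : Measurable h1) (hm2 : Measurable hη)
    (hbd : ∀ η₁, hmin ≤ h1 η₁ ∧ h1 η₁ ≤ hmax)
    (hCC : ∀ y₂ ∈ Set.Icc (0:ℝ) 1, ∀ η₁ : ℝ, |y₂ * hη η₁ / h1 η₁| ≤ C)
    (w1 w2 : ℝ × ℝ → ℝ)
    (hw1 : Integrable (fun p => (w1 p) ^ 2)
      (volume.restrict (Set.Icc (0:ℝ) 1 ×ˢ Set.Icc (0:ℝ) 1)))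
    (hw2 : Integrable (fun p => (w2 p) ^ 2)
      (volume.restrict (Set.Icc (0:ℝ) 1 ×ˢ Set.Icc (0:ℝ) 1)))
    (ha : Integrable (fun p =>
        h1 p.2 * (w1 p - (p.1 * hη p.2 / h1 p.2) * w2 p) ^ 2
          + (1 / h1 p.2) * (w2 p) ^ 2)
      (volume.restrict (Set.Icc (0:ℝ) 1 ×ˢ Set.Icc (0:ℝ) 1))) :
    ∀ lam : ℝ, C ^ 2 * hmax * hmin / (1 + C ^ 2 * hmax * hmin) < lam → lam < 1 →
      0 < hmin * (1 - lam) ∧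
      0 < (1 - 1 / lam) * C ^ 2 * hmin + 1 / hmax ∧
      hmin * (1 - lam) *
          (∫ p in Set.Icc (0:ℝ) 1 ×ˢ Set.Icc (0:ℝ) 1, (w1 p) ^ 2) +
        ((1 - 1 / lam) * C ^ 2 * hmin + 1 / hmax) *
          (∫ p in Set.Icc (0:ℝ) 1 ×ˢ Set.Icc (0:ℝ) 1, (w2 p) ^ 2) ≤
        ∫ p in Set.Icc (0:ℝ) 1 ×ˢ Set.Icc (0:ℝ) 1,
          (h1 p.2 * (w1 p - (p.1 * hη p.2 / h1 p.2) * w2 p) ^ 2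
            + (1 / h1 p.2) * (w2 p) ^ 2) := by
  intro lam hlam1 hlam2
  have hmax0 : 0 < hmax := hhmin.trans_le hminmax
  have hd : 0 < 1 + C ^ 2 * hmax * hmin := by positivity
  have hl0 : 0 < lam :=
    lt_of_le_of_lt (by positivity) hlam1
  have hKp : 0 < (lam - 1) * C ^ 2 * hmin * hmax + lam := by
    have h2 := (div_lt_iff₀ hd).1 hlam1
    nlinarith
  have hc1 : 0 < hmin * (1 - lam) := mul_pos hhmin (by linarith)
  have hK : 0 < (1 - 1 / lam) * C ^ 2 * hmin + 1 / hmax := by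
    have he : ((1 - 1 / lam) * C ^ 2 * hmin + 1 / hmax) * (lam * hmax)
        = (lam - 1) * C ^ 2 * hmin * hmax + lam := by
      field_simp
    nlinarith [mul_pos hl0 hmax0]
  refine ⟨hc1, hK, ?_⟩
  have hmS : MeasurableSet (Set.Icc (0:ℝ) 1 ×ˢ Set.Icc (0:ℝ) 1) :=
    measurableSet_Icc.prod measurableSet_Icc
  have hInt : Integrable (fun p => hmin * (1 - lam) * (w1 p) ^ 2
      + ((1 - 1 / lam) * C ^ 2 * hmin + 1 / hmax) * (w2 p) ^ 2)
      (volume.restrict (Set.Icc (0:ℝ) 1 ×ˢ Set.Icc (0:ℝ) 1)) :=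
    (hw1.const_mul _).add (hw2.const_mul _)
  have hae : ∀ᵐ p ∂(volume.restrict (Set.Icc (0:ℝ) 1 ×ˢ Set.Icc (0:ℝ) 1)),
      hmin * (1 - lam) * (w1 p) ^ 2
        + ((1 - 1 / lam) * C ^ 2 * hmin + 1 / hmax) * (w2 p) ^ 2
      ≤ h1 p.2 * (w1 p - (p.1 * hη p.2 / h1 p.2) * w2 p) ^ 2
          + (1 / h1 p.2) * (w2 p) ^ 2 := by
    refine (ae_restrict_iff' hmS).2 (ae_of_all _ ?_)
    intro p hp
    obtain ⟨hp1, hp2⟩ := hp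
    have hcb := hCC p.1 hp1 p.2
    have hc2 : (p.1 * hη p.2 / h1 p.2) ^ 2 ≤ C ^ 2 := by
      have h3 := pow_le_pow_left₀ (abs_nonneg (p.1 * hη p.2 / h1 p.2)) hcb 2
      rwa [sq_abs] at h3
    exact stmt12_key hmin hmax C lam (h1 p.2) (p.1 * hη p.2 / h1 p.2)
      (w1 p) (w2 p) hhmin hminmax hC hl0 hlam2 hKp (hbd p.2).1 (hbd p.2).2 hc2
  have hmono := integral_mono_ae hInt ha hae
  calc hmin * (1 - lam) *
          (∫ p in Set.Icc (0:ℝ) 1 ×ˢ Set.Icc (0:ℝ) 1, (w1 p) ^ 2) +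
        ((1 - 1 / lam) * C ^ 2 * hmin + 1 / hmax) *
          (∫ p in Set.Icc (0:ℝ) 1 ×ˢ Set.Icc (0:ℝ) 1, (w2 p) ^ 2)
      = ∫ p in Set.Icc (0:ℝ) 1 ×ˢ Set.Icc (0:ℝ) 1,
          (hmin * (1 - lam) * (w1 p) ^ 2
            + ((1 - 1 / lam) * C ^ 2 * hmin + 1 / hmax) * (w2 p) ^ 2) := by
        rw [integral_add (hw1.const_mul _) (hw2.const_mul _),
          integral_const_mul, integral_const_mul]
    _ ≤ _ := hmono
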